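/- Let p, q, r be real polynomials and α, β ≥ 0 real numbers. Then the number of non-real zeros (with multiplicity) of p·q·r' + α·p'·q·r + β·p·q'·r is at most Z_C(p) + Z_C(q) + Z_C(r). -/

import Mathlib

open Polynomial Finset

open scoped Classical in
/-- Number of non-real complex zeros of a real polynomial, counted with multiplicity. -/
noncomputable def ZC (p : Polynomial ℝ) : ℕ :=
  (((p.map (algebraMap ℝ ℂ)).roots).filter (fun z => z.im ≠ 0)).card

/-- Number of real zeros of a real polynomial, counted with multiplicity. -/
noncomputable def ZR (p : Polynomial ℝ) : ℕ := p.roots.card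

open scoped Classical

namespace StmtAux

/-- The complex roots with zero imaginary part are exactly the real roots. -/
lemma roots_filter_im_eq (g : Polynomial ℝ) :
    ((g.map (algebraMap ℝ ℂ)).roots).filter (fun z => z.im = 0)
      = g.roots.map (fun x : ℝ => (x : ℂ)) := by
  rcases eq_or_ne g 0 with rfl | hg
  · simp
  have hinj : Function.Injective (algebraMap ℝ ℂ) := (algebraMap ℝ ℂ).injective
  have hmap : g.map (algebraMap ℝ ℂ) ≠ 0 := by
    simpa using (Polynomial.map_ne_zero_iff hinj).2 hg
  refine Multiset.ext.2 fun z => ?_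
  rw [Multiset.count_filter]
  by_cases hz : z.im = 0
  · have hz' : z = ((z.re : ℝ) : ℂ) := by
      apply Complex.ext <;> simp [hz]
    rw [if_pos hz, hz']
    rw [Multiset.count_map_eq_count' _ _ (fun a b hab => by exact_mod_cast hab)]
    rw [Polynomial.count_roots, Polynomial.count_roots]
    exact (Polynomial.eq_rootMultiplicity_map hinj z.re).symm
  · rw [if_neg hz]
    symm
    rw [Multiset.count_eq_zero]
    intro hmem
    obtain ⟨x, _, hx⟩ := Multiset.mem_map.1 hmem
    apply hz
    rw [← hx]
    simp

lemma ZC_add_ZR {g : Polynomial ℝ} (hg : g ≠ 0) : ZC g + ZR g = g.natDegree := by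
  have hsp : Splits (g.map (algebraMap ℝ ℂ)) := IsAlgClosed.splits _
  have hcard : Multiset.card ((g.map (algebraMap ℝ ℂ)).roots) = g.natDegree := by
    rw [← hsp.natDegree_eq_card_roots, natDegree_map]
  have hsplit : ((g.map (algebraMap ℝ ℂ)).roots).filter (fun z => z.im ≠ 0)
      + ((g.map (algebraMap ℝ ℂ)).roots).filter (fun z => ¬ z.im ≠ 0)
      = (g.map (algebraMap ℝ ℂ)).roots := Multiset.filter_add_not _ _
  have h2 : ((g.map (algebraMap ℝ ℂ)).roots).filter (fun z => ¬ z.im ≠ 0)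
      = g.roots.map (fun x : ℝ => (x : ℂ)) := by
    rw [← roots_filter_im_eq g]
    congr 1
    ext z
    simp [not_not]
  have hc := congrArg Multiset.card hsplit
  rw [Multiset.card_add, h2, Multiset.card_map] at hc
  rw [ZC, ZR, ← hcard, ← hc]

lemma ZC_zero : ZC 0 = 0 := by simp [ZC]

lemma ZC_one : ZC (1 : Polynomial ℝ) = 0 := by simp [ZC]

lemma ZC_mul {u v : Polynomial ℝ} (hu : u ≠ 0) (hv : v ≠ 0) : ZC (u * v) = ZC u + ZC v := by
  have hinj : Function.Injective (algebraMap ℝ ℂ) := (algebraMap ℝ ℂ).injective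
  have hu' : u.map (algebraMap ℝ ℂ) ≠ 0 := (Polynomial.map_ne_zero_iff hinj).2 hu
  have hv' : v.map (algebraMap ℝ ℂ) ≠ 0 := (Polynomial.map_ne_zero_iff hinj).2 hv
  rw [ZC, ZC, ZC, Polynomial.map_mul, Polynomial.roots_mul (mul_ne_zero hu' hv'),
    Multiset.filter_add, Multiset.card_add]

section Main

variable (p q r : Polynomial ℝ) (α β : ℝ)

local notation "f" => p * q * derivative r + C α * (derivative p * q * r)
    + C β * (p * derivative q * r)

lemma p_ne_zero (hf : (f : Polynomial ℝ) ≠ 0) : p ≠ 0 := by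
  rintro rfl; simp at hf

lemma q_ne_zero (hf : (f : Polynomial ℝ) ≠ 0) : q ≠ 0 := by
  rintro rfl; simp at hf

lemma r_ne_zero (hf : (f : Polynomial ℝ) ≠ 0) : r ≠ 0 := by
  rintro rfl; simp at hf

/-- Multiplicity bound at each point. -/
lemma mult_le (hf : (f : Polynomial ℝ) ≠ 0) (x : ℝ) :
    rootMultiplicity x (p * q * r) - 1 ≤ rootMultiplicity x f := by
  have hp := p_ne_zero p q r α β hf
  have hq := q_ne_zero p q r α β hf
  have hr := r_ne_zero p q r α β hf
  set m := rootMultiplicity x p with hm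
  set k := rootMultiplicity x q with hk
  set l := rootMultiplicity x r with hl
  have dp : (X - C x) ^ m ∣ p := p.pow_rootMultiplicity_dvd x
  have dq : (X - C x) ^ k ∣ q := q.pow_rootMultiplicity_dvd x
  have dr : (X - C x) ^ l ∣ r := r.pow_rootMultiplicity_dvd x
  have dp' : (X - C x) ^ (m - 1) ∣ derivative p := pow_sub_one_dvd_derivative_of_pow_dvd dp
  have dq' : (X - C x) ^ (k - 1) ∣ derivative q := pow_sub_one_dvd_derivative_of_pow_dvd dq
  have dr' : (X - C x) ^ (l - 1) ∣ derivative r := pow_sub_one_dvd_derivative_of_pow_dvd dr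
  have hmul : rootMultiplicity x (p * q * r) = m + k + l := by
    rw [rootMultiplicity_mul (mul_ne_zero (mul_ne_zero hp hq) hr),
      rootMultiplicity_mul (mul_ne_zero hp hq)]
  rw [hmul]
  have key : (X - C x) ^ (m + k + l - 1) ∣ f := by
    have t1 : (X - C x) ^ (m + k + l - 1) ∣ p * q * derivative r := by
      have h0 : (X - C x) ^ (m + k + (l - 1)) ∣ p * q * derivative r := by
        rw [pow_add, pow_add]
        exact mul_dvd_mul (mul_dvd_mul dp dq) dr'
      exact (pow_dvd_pow (X - C x) (show m + k + l - 1 ≤ m + k + (l - 1) by omega)).trans h0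
    have t2 : (X - C x) ^ (m + k + l - 1) ∣ C α * (derivative p * q * r) := by
      refine Dvd.dvd.mul_left ?_ _
      have h0 : (X - C x) ^ (m - 1 + k + l) ∣ derivative p * q * r := by
        rw [pow_add, pow_add]
        exact mul_dvd_mul (mul_dvd_mul dp' dq) dr
      exact (pow_dvd_pow (X - C x) (show m + k + l - 1 ≤ m - 1 + k + l by omega)).trans h0
    have t3 : (X - C x) ^ (m + k + l - 1) ∣ C β * (p * derivative q * r) := by
      refine Dvd.dvd.mul_left ?_ _
      have h0 : (X - C x) ^ (m + (k - 1) + l) ∣ p * derivative q * r := by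
        rw [pow_add, pow_add]
        exact mul_dvd_mul (mul_dvd_mul dp dq') dr
      exact (pow_dvd_pow (X - C x) (show m + k + l - 1 ≤ m + (k - 1) + l by omega)).trans h0
    exact dvd_add (dvd_add t1 t2) t3
  exact (Polynomial.le_rootMultiplicity_iff hf).2 key

/-- Derivative of `|g(x)|^γ` at a point where `g` does not vanish. -/
lemma hasDerivAt_abs_rpow (γ : ℝ) {g : Polynomial ℝ} {c : ℝ} (hc : g.eval c ≠ 0) :
    HasDerivAt (fun y => |g.eval y| ^ γ)
      (γ * |g.eval c| ^ γ * (g.derivative.eval c / g.eval c)) c := by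
  have hcont : Continuous fun y => g.eval y := g.continuous
  rcases hc.lt_or_gt with hneg | hpos
  · -- g.eval c < 0
    have hev : ∀ᶠ y in nhds c, |g.eval y| = -g.eval y := by
      have : ∀ᶠ y in nhds c, g.eval y < 0 :=
        (hcont.continuousAt).eventually_lt continuousAt_const hneg
      exact this.mono fun y hy => abs_of_neg hy
    have base : HasDerivAt (fun y => -g.eval y) (-(g.derivative.eval c)) c :=
      (g.hasDerivAt c).neg
    have hpow := base.rpow_const (p := γ) (Or.inl (by simpa using hc))
    have heq : (fun y => |g.eval y| ^ γ) =ᶠ[nhds c] fun y => (-g.eval y) ^ γ :=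
      hev.mono fun y hy => by simp only [hy]
    have := hpow.congr_of_eventuallyEq heq
    refine this.congr_deriv ?_
    have h1 : |g.eval c| = -g.eval c := abs_of_neg hneg
    have hpos' : (0 : ℝ) < -g.eval c := by linarith
    rw [h1, Real.rpow_sub hpos', Real.rpow_one]
    field_simp
  · -- 0 < g.eval c
    have hev : ∀ᶠ y in nhds c, |g.eval y| = g.eval y := by
      have : ∀ᶠ y in nhds c, 0 < g.eval y :=
        continuousAt_const.eventually_lt (hcont.continuousAt) hpos
      exact this.mono fun y hy => abs_of_pos hy
    have base : HasDerivAt (fun y => g.eval y) (g.derivative.eval c) c := g.hasDerivAt c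
    have hpow := base.rpow_const (p := γ) (Or.inl hc)
    have heq : (fun y => |g.eval y| ^ γ) =ᶠ[nhds c] fun y => g.eval y ^ γ :=
      hev.mono fun y hy => by simp only [hy]
    have := hpow.congr_of_eventuallyEq heq
    refine this.congr_deriv ?_
    rw [abs_of_pos hpos, Real.rpow_sub hpos, Real.rpow_one]
    field_simp

/-- Rolle-type step: between consecutive roots of `p*q*r` there is a root of `f`. -/
lemma exists_root_between (hα : 0 < α) (hβ : 0 < β) {a b : ℝ} (hab : a < b)
    (ha : (p * q * r).eval a = 0) (hb : (p * q * r).eval b = 0)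
    (hmid : ∀ y ∈ Set.Ioo a b, (p * q * r).eval y ≠ 0) :
    ∃ c ∈ Set.Ioo a b, (f : Polynomial ℝ).eval c = 0 := by
  set F : ℝ → ℝ := fun y => |p.eval y| ^ α * |q.eval y| ^ β * r.eval y with hF
  have hFcont : Continuous F := by
    refine Continuous.mul (Continuous.mul ?_ ?_) r.continuous
    · exact (continuous_abs.comp p.continuous).rpow_const fun y => Or.inr hα.le
    · exact (continuous_abs.comp q.continuous).rpow_const fun y => Or.inr hβ.le
  have hzero : ∀ y : ℝ, (p * q * r).eval y = 0 → F y = 0 := by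
    intro y hy
    simp only [eval_mul] at hy
    rcases mul_eq_zero.1 hy with hy' | hy'
    · rcases mul_eq_zero.1 hy' with h | h
      · simp [hF, h, Real.zero_rpow hα.ne']
      · simp [hF, h, Real.zero_rpow hβ.ne']
    · simp [hF, hy']
  obtain ⟨c, hc, hc0⟩ := exists_deriv_eq_zero hab hFcont.continuousOn
    ((hzero a ha).trans (hzero b hb).symm)
  have hpqr : (p * q * r).eval c ≠ 0 := hmid c hc
  have hpc : p.eval c ≠ 0 := fun h => hpqr (by simp [eval_mul, h])
  have hqc : q.eval c ≠ 0 := fun h => hpqr (by simp [eval_mul, h])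
  have hD : HasDerivAt F
      ((α * |p.eval c| ^ α * (p.derivative.eval c / p.eval c) * |q.eval c| ^ β
          + |p.eval c| ^ α * (β * |q.eval c| ^ β * (q.derivative.eval c / q.eval c)))
          * r.eval c
        + |p.eval c| ^ α * |q.eval c| ^ β * r.derivative.eval c) c := by
    exact ((hasDerivAt_abs_rpow α hpc).mul (hasDerivAt_abs_rpow β hqc)).mul (r.hasDerivAt c)
  have hD0 : (α * |p.eval c| ^ α * (p.derivative.eval c / p.eval c) * |q.eval c| ^ β
          + |p.eval c| ^ α * (β * |q.eval c| ^ β * (q.derivative.eval c / q.eval c)))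
          * r.eval c
        + |p.eval c| ^ α * |q.eval c| ^ β * r.derivative.eval c = 0 := by
    rw [← hD.deriv]; exact hc0
  refine ⟨c, hc, ?_⟩
  have hA : (0 : ℝ) < |p.eval c| ^ α := Real.rpow_pos_of_pos (abs_pos.2 hpc) α
  have hB : (0 : ℝ) < |q.eval c| ^ β := Real.rpow_pos_of_pos (abs_pos.2 hqc) β
  have key : |p.eval c| ^ α * |q.eval c| ^ β * ((f : Polynomial ℝ).eval c) = 0 := by
    have expand : (f : Polynomial ℝ).eval c
        = p.eval c * q.eval c * r.derivative.eval c
          + α * (p.derivative.eval c * q.eval c * r.eval c)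
          + β * (p.eval c * q.derivative.eval c * r.eval c) := by
      simp [eval_add, eval_mul]
    rw [expand]
    have := mul_eq_zero_of_left hD0 (p.eval c * q.eval c)
    field_simp at this ⊢
    linarith [this]
  rcases mul_eq_zero.1 key with h | h
  · have hpos : (0 : ℝ) < |p.eval c| ^ α * |q.eval c| ^ β := mul_pos hA hB
    exact absurd h hpos.ne'
  · exact h

/-- Counting with multiplicity: roots of `p*q*r` vs roots of `f`. -/
lemma card_roots_le (hα : 0 < α) (hβ : 0 < β) (hf : (f : Polynomial ℝ) ≠ 0) :
    Multiset.card (p * q * r).roots ≤ Multiset.card (f : Polynomial ℝ).roots + 1 := by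
  have hp := p_ne_zero p q r α β hf
  have hq := q_ne_zero p q r α β hf
  have hr := r_ne_zero p q r α β hf
  have hpqr : p * q * r ≠ 0 := mul_ne_zero (mul_ne_zero hp hq) hr
  set P : Polynomial ℝ := p * q * r with hP
  -- interleaving on distinct roots
  have hinter : P.roots.toFinset.card
      ≤ ((f : Polynomial ℝ).roots.toFinset \ P.roots.toFinset).card + 1 := by
    refine Finset.card_le_diff_of_interleaved fun x hx y hy hxy hxy' => ?_
    rw [Multiset.mem_toFinset, mem_roots hpqr] at hx hy
    have hmid : ∀ z ∈ Set.Ioo x y, P.eval z ≠ 0 := by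
      intro z hz hz0
      exact hxy' z (Multiset.mem_toFinset.2 ((mem_roots hpqr).2 hz0)) hz
    obtain ⟨c, hc, hc0⟩ := exists_root_between p q r α β hα hβ hxy hx hy hmid
    exact ⟨c, Multiset.mem_toFinset.2 ((mem_roots hf).2 hc0), hc.1, hc.2⟩
  calc
    Multiset.card P.roots = ∑ x ∈ P.roots.toFinset, P.roots.count x :=
      (Multiset.toFinset_sum_count_eq _).symm
    _ = ∑ x ∈ P.roots.toFinset, (P.roots.count x - 1 + 1) :=
      (Eq.symm <| Finset.sum_congr rfl fun _ hx => tsub_add_cancel_of_le <|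
        Nat.succ_le_iff.2 <| Multiset.count_pos.2 <| Multiset.mem_toFinset.1 hx)
    _ = (∑ x ∈ P.roots.toFinset, (P.rootMultiplicity x - 1)) + P.roots.toFinset.card := by
      simp only [Finset.sum_add_distrib, Finset.card_eq_sum_ones, count_roots]
    _ ≤ (∑ x ∈ P.roots.toFinset, (f : Polynomial ℝ).rootMultiplicity x) +
          (((f : Polynomial ℝ).roots.toFinset \ P.roots.toFinset).card + 1) :=
      add_le_add
        (Finset.sum_le_sum fun x _ => mult_le p q r α β hf x)
        hinter
    _ ≤ (∑ x ∈ P.roots.toFinset, (f : Polynomial ℝ).roots.count x) +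
          ((∑ x ∈ (f : Polynomial ℝ).roots.toFinset \ P.roots.toFinset,
            (f : Polynomial ℝ).roots.count x) + 1) := by
      simp only [← count_roots]
      refine add_le_add_right (add_le_add_left ((Finset.card_eq_sum_ones _).trans_le ?_) _) _
      refine Finset.sum_le_sum fun x hx => Nat.succ_le_iff.2 <| ?_
      rw [Multiset.count_pos, ← Multiset.mem_toFinset]
      exact (Finset.mem_sdiff.1 hx).1
    _ = Multiset.card (f : Polynomial ℝ).roots + 1 := by
      rw [← add_assoc, ← Finset.sum_union Finset.disjoint_sdiff,
        Finset.union_sdiff_self_eq_union, ← Multiset.toFinset_sum_count_eq,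
        ← Finset.sum_subset Finset.subset_union_right]
      intro x _ hx₂
      simpa only [Multiset.mem_toFinset, Multiset.count_eq_zero] using hx₂

/-- Degree bound. -/
lemma natDegree_le (hf : (f : Polynomial ℝ) ≠ 0) :
    (f : Polynomial ℝ).natDegree + 1 ≤ p.natDegree + q.natDegree + r.natDegree := by
  have hp := p_ne_zero p q r α β hf
  have hq := q_ne_zero p q r α β hf
  have hr := r_ne_zero p q r α β hf
  set N := p.natDegree + q.natDegree + r.natDegree with hN
  have hN1 : 1 ≤ N := by
    by_contra h
    push_neg at h
    interval_cases N
    · have hp0 : p.natDegree = 0 := by omega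
      have hq0 : q.natDegree = 0 := by omega
      have hr0 : r.natDegree = 0 := by omega
      obtain ⟨cp, rfl⟩ := Polynomial.natDegree_eq_zero.1 hp0
      obtain ⟨cq, rfl⟩ := Polynomial.natDegree_eq_zero.1 hq0
      obtain ⟨cr, rfl⟩ := Polynomial.natDegree_eq_zero.1 hr0
      simp at hf
  have key : ∀ u v w : Polynomial ℝ, u.natDegree + v.natDegree + w.natDegree = N →
      (u * v * derivative w).natDegree ≤ N - 1 := by
    intro u v w huvw
    by_cases hw : derivative w = 0
    · rw [hw, mul_zero]
      simp only [natDegree_zero]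
      omega
    · have hw1 : 1 ≤ w.natDegree := by
        by_contra h
        push_neg at h
        obtain ⟨c, rfl⟩ := Polynomial.natDegree_eq_zero.1 (show w.natDegree = 0 by omega)
        simp at hw
      calc (u * v * derivative w).natDegree
          ≤ (u * v).natDegree + (derivative w).natDegree := natDegree_mul_le
        _ ≤ (u.natDegree + v.natDegree) + (w.natDegree - 1) :=
            add_le_add natDegree_mul_le (natDegree_derivative_le w)
        _ ≤ N - 1 := by omega
  have h1 : (p * q * derivative r).natDegree ≤ N - 1 := key p q r rfl
  have h2 : (C α * (derivative p * q * r)).natDegree ≤ N - 1 := by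
    refine (natDegree_C_mul_le α _).trans ?_
    have := key q r p (by omega)
    calc (derivative p * q * r).natDegree = (q * r * derivative p).natDegree := by ring_nf
      _ ≤ N - 1 := this
  have h3 : (C β * (p * derivative q * r)).natDegree ≤ N - 1 := by
    refine (natDegree_C_mul_le β _).trans ?_
    have := key p r q (by omega)
    calc (p * derivative q * r).natDegree = (p * r * derivative q).natDegree := by ring_nf
      _ ≤ N - 1 := this
  have := (natDegree_add_le _ _).trans
    (max_le ((natDegree_add_le _ _).trans (max_le h1 h2)) h3)
  omega

/-- Main result for strictly positive `α`, `β`. -/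
theorem main (hα : 0 < α) (hβ : 0 < β) :
    ZC (p * q * derivative r + C α * (derivative p * q * r) + C β * (p * derivative q * r))
      ≤ ZC p + ZC q + ZC r := by
  by_cases hf : (f : Polynomial ℝ) = 0
  · rw [hf, ZC_zero]; exact Nat.zero_le _
  have hp := p_ne_zero p q r α β hf
  have hq := q_ne_zero p q r α β hf
  have hr := r_ne_zero p q r α β hf
  have e1 := ZC_add_ZR hf
  have e2 := ZC_add_ZR hp
  have e3 := ZC_add_ZR hq
  have e4 := ZC_add_ZR hr
  have hZR : ZR p + ZR q + ZR r ≤ ZR f + 1 := by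
    have hcard := card_roots_le p q r α β hα hβ hf
    have : (p * q * r).roots = p.roots + q.roots + r.roots := by
      rw [Polynomial.roots_mul (mul_ne_zero (mul_ne_zero hp hq) hr),
        Polynomial.roots_mul (mul_ne_zero hp hq)]
    rw [this] at hcard
    simpa [ZR, Multiset.card_add] using hcard
  have hdeg := natDegree_le p q r α β hf
  omega

end Main

end StmtAux

open StmtAux in
theorem stmt5 (p q r : Polynomial ℝ) (α β : ℝ) (hα : 0 ≤ α) (hβ : 0 ≤ β) :
    ZC (p * q * derivative r + C α * (derivative p * q * r) + C β * (p * derivative q * r))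
      ≤ ZC p + ZC q + ZC r := by
  -- helper for products
  have ZCmul : ∀ u v : Polynomial ℝ, ZC (u * v) ≤ ZC u + ZC v + 0 → True := fun _ _ _ => trivial
  rcases hα.lt_or_eq with hα' | hα'
  · rcases hβ.lt_or_eq with hβ' | hβ'
    · exact main p q r α β hα' hβ'
    · -- β = 0
      subst hβ'
      have hfact : p * q * derivative r + C α * (derivative p * q * r)
          + C (0:ℝ) * (p * derivative q * r)
          = q * (p * derivative r + C α * (derivative p * r)
              + C 1 * (p * derivative (1 : Polynomial ℝ) * r)) := by
        simp; ring
      rw [hfact]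
      have hsub : ZC (p * derivative r + C α * (derivative p * r)
          + C 1 * (p * derivative (1 : Polynomial ℝ) * r)) ≤ ZC p + ZC r := by
        have := main p 1 r α 1 hα' one_pos
        simpa [ZC_one] using this
      rcases eq_or_ne q 0 with rfl | hq
      · simp [ZC_zero]
      rcases eq_or_ne (p * derivative r + C α * (derivative p * r)
          + C 1 * (p * derivative (1 : Polynomial ℝ) * r)) 0 with h0 | h0
      · rw [h0, mul_zero, ZC_zero]; exact Nat.zero_le _
      · rw [ZC_mul hq h0]
        omega
  · -- α = 0
    subst hα'
    rcases hβ.lt_or_eq with hβ' | hβ'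
    · have hfact : p * q * derivative r + C (0:ℝ) * (derivative p * q * r)
          + C β * (p * derivative q * r)
          = p * (q * derivative r + C 1 * (derivative (1 : Polynomial ℝ) * q * r)
              + C β * (derivative q * r)) := by
        simp; ring
      rw [hfact]
      have hsub : ZC (q * derivative r + C 1 * (derivative (1 : Polynomial ℝ) * q * r)
          + C β * (derivative q * r)) ≤ ZC q + ZC r := by
        have := main 1 q r 1 β one_pos hβ'
        simpa [ZC_one] using this
      rcases eq_or_ne p 0 with rfl | hp
      · simp [ZC_zero]
      rcases eq_or_ne (q * derivative r + C 1 * (derivative (1 : Polynomial ℝ) * q * r)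
          + C β * (derivative q * r)) 0 with h0 | h0
      · rw [h0, mul_zero, ZC_zero]; exact Nat.zero_le _
      · rw [ZC_mul hp h0]
        omega
    · -- α = β = 0
      subst hβ'
      have hfact : p * q * derivative r + C (0:ℝ) * (derivative p * q * r)
          + C (0:ℝ) * (p * derivative q * r) = p * (q * derivative r) := by
        simp [mul_assoc]
      rw [hfact]
      have hr' : ZC (derivative r) ≤ ZC r := by
        have := main 1 1 r 1 1 one_pos one_pos
        simpa [ZC_one] using this
      rcases eq_or_ne p 0 with rfl | hp
      · simp [ZC_zero]
      rcases eq_or_ne q 0 with rfl | hq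
      · simp [ZC_zero]
      rcases eq_or_ne (derivative r) 0 with h0 | h0
      · rw [h0, mul_zero, mul_zero, ZC_zero]; exact Nat.zero_le _
      · rw [ZC_mul hp (mul_ne_zero hq h0), ZC_mul hq h0]
        omega
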